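/- For any positive integers n >= 3 and k, d_k(D_{2n}) = nk + 1; and for n >= 2, d_k(Q_{4n}) = 2nk + 1. -/

import Mathlib

open List Subgroup

/-- The set of all products of the terms of `S` in all orders. -/
def PiSet {G : Type*} [Group G] (S : List G) : Set G :=
  {g | ∃ l : List G, l.Perm S ∧ l.prod = g}

/-- `S` is a product-one sequence if `1 ∈ Π(S)`. -/
def IsProdOne {G : Type*} [Group G] (S : List G) : Prop :=
  (1 : G) ∈ PiSet S

/-- The Davenport constant `d(G)`: the smallest `m` such that every sequence of
length `m` over `G` contains a nonempty product-one subsequence. -/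
noncomputable def dC (G : Type*) [Group G] : ℕ :=
  sInf {m | 0 < m ∧ ∀ S : List G, S.length = m →
    ∃ T : List G, T ≠ [] ∧ T.Sublist S ∧ IsProdOne T}

/-- `e(G)`: the smallest `m` such that every nonempty product-one sequence over `G`
contains a nonempty product-one subsequence of length at most `m`. -/
noncomputable def eC (G : Type*) [Group G] : ℕ :=
  sInf {m | 0 < m ∧ ∀ S : List G, S ≠ [] → IsProdOne S →
    ∃ T : List G, T ≠ [] ∧ T.Sublist S ∧ T.length ≤ m ∧ IsProdOne T}

/-- `f(G)`: the smallest `m` such that every sequence of length `d(G)` over `G`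
contains a nonempty product-one subsequence of length at most `m`. -/
noncomputable def fC (G : Type*) [Group G] : ℕ :=
  sInf {m | 0 < m ∧ ∀ S : List G, S.length = dC G →
    ∃ T : List G, T ≠ [] ∧ T.Sublist S ∧ T.length ≤ m ∧ IsProdOne T}

/-- The `k`-th Davenport constant `d_k(G)`: the smallest `m` such that every sequence of
length `m` over `G` contains `k` pairwise disjoint nonempty product-one subsequences. -/
noncomputable def dkC (G : Type*) [Group G] (k : ℕ) : ℕ :=
  sInf {m | 0 < m ∧ ∀ S : List G, S.length = m →
    ∃ Ts : List (List G), Ts.length = k ∧ (∀ T ∈ Ts, T ≠ [] ∧ IsProdOne T) ∧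
      (Ts.flatten : Multiset G) ≤ (S : Multiset G)}

/-- helper notion: `S` has a nonempty product-one sub-multiset of size at most `N`. -/
def Good {G : Type*} [Group G] (N : ℕ) (S : List G) : Prop :=
  ∃ T : List G, T ≠ [] ∧ (↑T : Multiset G) ≤ (↑S : Multiset G) ∧ T.length ≤ N ∧ IsProdOne T

namespace DkAux

lemma isProdOne_self {G : Type*} [Group G] {T : List G} (h : T.prod = 1) : IsProdOne T :=
  ⟨T, List.Perm.refl T, h⟩

/-- extract a nonempty "infix" of a list with prescribed sum difference -/
lemma infix_spec {A : Type*} [AddCommGroup A] (R : List A) (i j : ℕ) (hij : i < j)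
    (hj : j ≤ R.length) :
    ∃ C : List A, C ≠ [] ∧ C <+ R ∧ C.length = j - i ∧
      C.sum = (R.take j).sum - (R.take i).sum := by
  refine ⟨(R.take j).drop i, ?_, ((R.take j).drop_sublist i).trans (R.take_sublist j), ?_, ?_⟩
  · have hlen : ((R.take j).drop i).length = j - i := by
      simp [List.length_drop, List.length_take]
      omega
    intro h
    rw [h] at hlen
    simp at hlen
    omega
  · simp [List.length_drop, List.length_take]; omega
  · have h1 : R.take j = (R.take j).take i ++ (R.take j).drop i := (List.take_append_drop _ _).symm
    have h2 : (R.take j).take i = R.take i := by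
      rw [List.take_take]
      congr 1
      omega
    have := congrArg List.sum h1
    rw [List.sum_append, h2] at this
    rw [eq_sub_iff_add_eq, add_comm]
    exact this.symm

lemma pair_sublist {α : Type*} (l : List α) (d : α) {i j : ℕ} (hij : i < j) (hj : j < l.length) :
    [l.getD i d, l.getD j d] <+ l := by
  have hi : i < l.length := lt_trans hij hj
  rw [List.getD_eq_getElem l d hi, List.getD_eq_getElem l d hj]
  have h1 : l.drop i = l[i] :: l.drop (i + 1) := List.drop_eq_getElem_cons hi
  have hj' : j - (i+1) < (l.drop (i+1)).length := by simp [List.length_drop]; omega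
  have h2 : l[j] ∈ l.drop (i + 1) := by
    rw [List.mem_iff_getElem]
    refine ⟨j - (i+1), hj', ?_⟩
    rw [List.getElem_drop]
    congr 1
    omega
  have : [l[i], l[j]] <+ l[i] :: l.drop (i + 1) :=
    List.Sublist.cons₂ _ (List.singleton_sublist.2 h2)
  rw [← h1] at this
  exact this.trans (l.drop_sublist i)

lemma prod_map_r {n : ℕ} (C : List (ZMod n)) :
    (C.map DihedralGroup.r).prod = DihedralGroup.r C.sum := by
  induction C with
  | nil => simp
  | cons x C ih => simp [ih, DihedralGroup.r_mul_r]

lemma prod_map_a {n : ℕ} (C : List (ZMod (2*n))) :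
    (C.map QuaternionGroup.a).prod = QuaternionGroup.a C.sum := by
  induction C with
  | nil => simp
  | cons x C ih => simp [ih, QuaternionGroup.a_mul_a]

end DkAux

namespace DkAux
open DihedralGroup

variable {n : ℕ}

def rotVals (S : List (DihedralGroup n)) : List (ZMod n) :=
  S.filterMap fun g => match g with | .r i => some i | .sr _ => none

def refVals (S : List (DihedralGroup n)) : List (ZMod n) :=
  S.filterMap fun g => match g with | .sr i => some i | .r _ => none

lemma part_dihedral (S : List (DihedralGroup n)) :
    (↑S : Multiset (DihedralGroup n)) = ↑((rotVals S).map r) + ↑((refVals S).map sr) := by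
  induction S with
  | nil => simp [rotVals, refVals]
  | cons g S ih =>
    cases g with
    | r i =>
      have h1 : rotVals (r i :: S) = i :: rotVals S := by simp [rotVals, List.filterMap_cons]
      have h2 : refVals (r i :: S) = refVals S := by simp [refVals, List.filterMap_cons]
      rw [h1, h2, ← Multiset.cons_coe, ih]
      simp [← Multiset.cons_coe, Multiset.cons_add]
    | sr i =>
      have h1 : rotVals (sr i :: S) = rotVals S := by simp [rotVals, List.filterMap_cons]
      have h2 : refVals (sr i :: S) = i :: refVals S := by simp [refVals, List.filterMap_cons]
      rw [h1, h2, ← Multiset.cons_coe, ih, List.map_cons, ← Multiset.cons_coe, Multiset.add_cons]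
    
lemma len_part_dihedral (S : List (DihedralGroup n)) :
    (rotVals S).length + (refVals S).length = S.length := by
  have := congrArg Multiset.card (part_dihedral S)
  simpa using this.symm

lemma le_S_of_rot {S : List (DihedralGroup n)} {C : List (ZMod n)} (hC : C <+ rotVals S) :
    (↑(C.map r) : Multiset (DihedralGroup n)) ≤ ↑S := by
  rw [part_dihedral S]
  exact le_trans (Multiset.coe_le.2 (hC.map r).subperm) (Multiset.le_add_right _ _)

lemma le_S_of_mixed {S : List (DihedralGroup n)} {C : List (ZMod n)} {P : List (ZMod n)}
    (hC : C <+ rotVals S) (hP : P <+ refVals S) :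
    (↑(C.map r) : Multiset (DihedralGroup n)) + ↑(P.map sr) ≤ ↑S := by
  rw [part_dihedral S]
  exact add_le_add (Multiset.coe_le.2 (hC.map r).subperm) (Multiset.coe_le.2 (hP.map sr).subperm)

/-- two reflections (positions i < j in refVals) plus a rotation infix whose sum matches. -/
lemma good_of_pair_infix {S : List (DihedralGroup n)} {N : ℕ} {i j : ℕ} (hij : i < j)
    (hj : j < (refVals S).length) (C : List (ZMod n)) (hC : C <+ rotVals S)
    (hlen : C.length + 2 ≤ N)
    (hsum : C.sum = (refVals S).getD j 0 - (refVals S).getD i 0 ∨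
            C.sum = (refVals S).getD i 0 - (refVals S).getD j 0) : Good N S := by
  set u := (refVals S).getD i 0 with hu
  set v := (refVals S).getD j 0 with hv
  have hpair : [u, v] <+ refVals S := pair_sublist _ 0 hij hj
  have hbase : (↑(C.map r) : Multiset (DihedralGroup n)) + ↑([u,v].map sr) ≤ ↑S :=
    le_S_of_mixed hC hpair
  have key : ∀ p q : ZMod n, C.sum = q - p →
      (↑(C.map r) : Multiset (DihedralGroup n)) + ↑([p,q].map sr) ≤ ↑S → Good N S := by
    intro p q hpq hle
    refine ⟨DihedralGroup.sr p :: (C.map r ++ [DihedralGroup.sr q]), by simp, ?_,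
      by simp; omega, isProdOne_self ?_⟩
    · refine le_trans (le_of_eq (Multiset.coe_eq_coe.2 ?_)) hle
      calc DihedralGroup.sr p :: (C.map r ++ [DihedralGroup.sr q])
          = [DihedralGroup.sr p] ++ (C.map r ++ [DihedralGroup.sr q]) := rfl
        _ ~ (C.map r ++ [DihedralGroup.sr q]) ++ [DihedralGroup.sr p] := List.perm_append_comm
        _ = C.map r ++ [DihedralGroup.sr q, DihedralGroup.sr p] := by simp
        _ ~ C.map r ++ [DihedralGroup.sr p, DihedralGroup.sr q] :=
            List.Perm.append_left _ (List.Perm.swap _ _ _)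
        _ = C.map r ++ [p,q].map sr := rfl
    · rw [List.prod_cons, List.prod_append, prod_map_r, List.prod_singleton, r_mul_sr,
        sr_mul_sr, hpq, DihedralGroup.one_def]
      congr 1
      ring
  rcases hsum with h | h
  · exact key u v h hbase
  · refine key v u h (le_trans (le_of_eq ?_) hbase)
    have : (↑([v,u].map sr) : Multiset (DihedralGroup n)) = ↑([u,v].map sr) :=
      Multiset.coe_eq_coe.2 (List.Perm.swap _ _ _)
    rw [this]

lemma good_of_rot_zero {S : List (DihedralGroup n)} {N : ℕ} {C : List (ZMod n)}
    (hC : C <+ rotVals S) (hne : C ≠ []) (hlen : C.length ≤ N) (hsum : C.sum = 0) : Good N S := by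
  refine ⟨C.map r, by simpa using hne, le_S_of_rot hC, by simpa using hlen, isProdOne_self ?_⟩
  rw [prod_map_r, hsum, DihedralGroup.one_def]

end DkAux

namespace DkAux
open DihedralGroup

lemma fD {n : ℕ} (hn : 3 ≤ n) (S : List (DihedralGroup n)) (hS : S.length = n + 1) :
    Good n S := by
  haveI : NeZero n := ⟨by omega⟩
  have hmk : (rotVals S).length + (refVals S).length = n + 1 := by
    rw [len_part_dihedral S, hS]
  set R := rotVals S with hR
  set F := refVals S with hF
  set k := F.length with hk
  set m := R.length with hm
  set a : ℕ → ZMod n := fun t => F.getD t 0 with ha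
  have hcard : Fintype.card (ZMod n) = n := ZMod.card n
  rcases lt_trichotomy k 2 with hk1 | hk2 | hk3
  · -- k ≤ 1 : at least n rotations
    have hmn : n ≤ m := by omega
    have key : ∀ t t' : Fin (n+1), t < t' → (R.take t).sum = (R.take t').sum → Good n S := by
      intro t t' hlt hsum
      obtain ⟨C, hCne, hCsub, hClen, hCsum⟩ :=
        infix_spec R t t' hlt (le_trans (by omega : (t' : ℕ) ≤ n) hmn)
      exact good_of_rot_zero hCsub hCne (by omega)
        (by rw [hCsum, hsum, sub_self])
    obtain ⟨t, t', hne, heq⟩ := Fintype.exists_ne_map_eq_of_card_lt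
      (fun t : Fin (n+1) => (R.take t).sum) (by rw [hcard, Fintype.card_fin]; omega)
    rcases hne.lt_or_gt with h | h
    · exact key _ _ h heq
    · exact key _ _ h heq.symm
  · -- k = 2
    have hm2 : m = n - 1 := by omega
    have hFlen : 1 < (refVals S).length := by rw [← hF, ← hk]; omega
    by_cases hval : a 0 = a 1
    · refine good_of_pair_infix (by omega : (0:ℕ) < 1) hFlen [] (List.nil_sublist _)
        (by simp; omega) (Or.inl ?_)
      show (0 : ZMod n) = a 1 - a 0
      rw [hval, sub_self]
    · have hδ : a 1 - a 0 ≠ 0 := sub_ne_zero_of_ne (fun h => hval h.symm)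
      set g : Fin (n-1) → ZMod n := fun t => (R.take t).sum with hg
      by_cases hinj : Function.Injective g
      · set A := Finset.image g Finset.univ with hA
        set B := Finset.image (fun t => g t + (a 1 - a 0)) Finset.univ with hB
        have hAcard : A.card = n - 1 := by
          rw [hA, Finset.card_image_of_injective _ hinj, Finset.card_univ, Fintype.card_fin]
        have hBcard : B.card = n - 1 := by
          have hinj' : Function.Injective (fun t => g t + (a 1 - a 0)) := by
            intro x y hxy
            exact hinj (by simpa using hxy)
          rw [hB, Finset.card_image_of_injective _ hinj', Finset.card_univ, Fintype.card_fin]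
        have hnd : ¬ Disjoint A B := by
          intro hd
          have h1 := Finset.card_union_of_disjoint hd
          have h2 : (A ∪ B).card ≤ n := le_trans (Finset.card_le_univ _)
            (by simp [Finset.card_univ, hcard])
          omega
        obtain ⟨x, hxA, hxB⟩ := Finset.not_disjoint_iff.1 hnd
        obtain ⟨t, -, hgt⟩ := Finset.mem_image.1 hxA
        obtain ⟨t', -, hgt'⟩ := Finset.mem_image.1 hxB
        have hsum' : g t = g t' + (a 1 - a 0) := by rw [hgt, hgt']
        have htt : t' ≠ t := by
          intro h
          rw [h, left_eq_add] at hsum'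
          exact hδ hsum'
        have htb := t.isLt
        have htb' := t'.isLt
        rcases htt.lt_or_gt with hlt | hlt
        · obtain ⟨C, hCne, hCsub, hClen, hCsum⟩ :=
            infix_spec R t' t hlt (by omega : (t : ℕ) ≤ m)
          refine good_of_pair_infix (by omega : (0:ℕ) < 1) hFlen C hCsub (by omega)
            (Or.inl ?_)
          show C.sum = a 1 - a 0
          rw [hCsum]
          have : (R.take (t:ℕ)).sum = g t := rfl
          rw [this, show (R.take (t':ℕ)).sum = g t' from rfl, hsum']
          ring
        · obtain ⟨C, hCne, hCsub, hClen, hCsum⟩ :=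
            infix_spec R t t' hlt (by omega : (t' : ℕ) ≤ m)
          refine good_of_pair_infix (by omega : (0:ℕ) < 1) hFlen C hCsub (by omega)
            (Or.inr ?_)
          show C.sum = a 0 - a 1
          rw [hCsum]
          rw [show (R.take (t':ℕ)).sum = g t' from rfl, show (R.take (t:ℕ)).sum = g t from rfl,
            hsum']
          ring
      · rw [Function.not_injective_iff] at hinj
        obtain ⟨t, t', heq, hne⟩ := hinj
        have key : ∀ t t' : Fin (n-1), t < t' → g t = g t' → Good n S := by
          intro t t' hlt hsum
          obtain ⟨C, hCne, hCsub, hClen, hCsum⟩ :=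
            infix_spec R t t' hlt (by omega : (t' : ℕ) ≤ m)
          refine good_of_rot_zero hCsub hCne (by omega) ?_
          rw [hCsum, show (R.take (t':ℕ)).sum = g t' from rfl,
            show (R.take (t:ℕ)).sum = g t from rfl, ← hsum, sub_self]
        rcases hne.lt_or_gt with h | h
        · exact key _ _ h heq
        · exact key _ _ h heq.symm
  · -- k ≥ 3
    have hyp : k - 1 + m = n := by omega
    set hh : ℕ := k - 1 with hhh
    set q : ℕ → ZMod n := fun t => (a 0 - a (min t hh)) + (R.take (t - hh)).sum with hq
    have key : ∀ t t' : ℕ, t < t' → t' ≤ n → q t = q t' → Good n S := by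
      intro t t' hlt ht'n heq
      by_cases ht' : t' ≤ hh
      · -- two reflections, equal values
        have hmin : min t hh = t := min_eq_left (by omega)
        have hmin' : min t' hh = t' := min_eq_left ht'
        have hsub : t - hh = 0 := by omega
        have hsub' : t' - hh = 0 := by omega
        rw [hq] at heq
        simp only [hmin, hmin', hsub, hsub', List.take_zero, List.sum_nil, add_zero] at heq
        have hat : a t = a t' := by linear_combination -heq
        have hjk : t' < (refVals S).length := by rw [← hF, ← hk]; omega
        refine good_of_pair_infix hlt hjk [] (List.nil_sublist _) (by simp; omega)
          (Or.inl ?_)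
        show (0 : ZMod n) = a t' - a t
        rw [hat, sub_self]
      · by_cases ht : hh ≤ t
        · -- pure rotations
          have hmin : min t hh = hh := min_eq_right ht
          have hmin' : min t' hh = hh := min_eq_right (by omega)
          rw [hq] at heq
          simp only [hmin, hmin'] at heq
          have hsums : (R.take (t - hh)).sum = (R.take (t' - hh)).sum := add_left_cancel heq
          obtain ⟨C, hCne, hCsub, hClen, hCsum⟩ :=
            infix_spec R (t - hh) (t' - hh) (by omega) (by omega)
          exact good_of_rot_zero hCsub hCne (by omega) (by rw [hCsum, hsums, sub_self])
        · -- mixed : t < hh < t'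
          have hmin : min t hh = t := min_eq_left (by omega)
          have hmin' : min t' hh = hh := min_eq_right (by omega)
          have hsub : t - hh = 0 := by omega
          rw [hq] at heq
          simp only [hmin, hmin', hsub, List.take_zero, List.sum_nil, add_zero] at heq
          have hs : (R.take (t' - hh)).sum = a hh - a t := by linear_combination -heq
          have hjk : hh < (refVals S).length := by rw [← hF, ← hk]; omega
          refine good_of_pair_infix (show t < hh by omega) hjk (R.take (t' - hh))
            (List.take_sublist _ _) ?_ (Or.inl ?_)
          · have : (R.take (t' - hh)).length ≤ m := by
              rw [List.length_take]; omega
            omega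
          · show (R.take (t' - hh)).sum = a hh - a t
            exact hs
    obtain ⟨t, t', hne, heq⟩ := Fintype.exists_ne_map_eq_of_card_lt
      (fun t : Fin (n+1) => q ↑t) (by rw [hcard, Fintype.card_fin]; omega)
    rcases hne.lt_or_gt with h | h
    · exact key _ _ h (by omega) heq
    · exact key _ _ h (by omega) heq.symm

end DkAux

namespace DkAux

variable {n : ℕ}

/-- the projection QuaternionGroup n → DihedralGroup n -/
def piFun (n : ℕ) : QuaternionGroup n → DihedralGroup n
  | .a i => .r (ZMod.castHom (dvd_mul_left n 2) (ZMod n) i)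
  | .xa i => .sr (ZMod.castHom (dvd_mul_left n 2) (ZMod n) i)

def pi (n : ℕ) : QuaternionGroup n →* DihedralGroup n :=
  MonoidHom.mk' (piFun n) (by
    rintro (i | i) (j | j) <;>
      simp [piFun, QuaternionGroup.a_mul_a, QuaternionGroup.a_mul_xa, QuaternionGroup.xa_mul_a,
        QuaternionGroup.xa_mul_xa, DihedralGroup.r_mul_r, DihedralGroup.r_mul_sr,
        DihedralGroup.sr_mul_r, DihedralGroup.sr_mul_sr, map_add, map_sub, ZMod.natCast_self])

@[simp] lemma pi_a (i : ZMod (2*n)) :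
    pi n (QuaternionGroup.a i) = DihedralGroup.r (ZMod.castHom (dvd_mul_left n 2) (ZMod n) i) :=
  rfl

@[simp] lemma pi_xa (i : ZMod (2*n)) :
    pi n (QuaternionGroup.xa i) = DihedralGroup.sr (ZMod.castHom (dvd_mul_left n 2) (ZMod n) i) :=
  rfl

lemma pi_ker {g : QuaternionGroup n} (hn : 0 < n) (h : pi n g = 1) :
    g = 1 ∨ g = QuaternionGroup.a (n : ZMod (2*n)) := by
  haveI : NeZero (2*n) := ⟨by omega⟩
  cases g with
  | a i =>
    have hc0 : (ZMod.castHom (dvd_mul_left n 2) (ZMod n)) i = 0 := by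
      rw [DihedralGroup.one_def, pi_a] at h
      injection h
    have hi : ((i.val : ℕ) : ZMod n) = 0 := by
      rw [ZMod.natCast_val,
        show (ZMod.cast i : ZMod n) = ZMod.castHom (dvd_mul_left n 2) (ZMod n) i from
          (ZMod.castHom_apply i).symm]
      exact hc0
    have hdvd : n ∣ i.val := (ZMod.natCast_eq_zero_iff _ _).1 hi
    have hlt : i.val < 2 * n := i.val_lt
    obtain ⟨c, hc⟩ := hdvd
    have hival : i = ((i.val : ℕ) : ZMod (2*n)) := by
      rw [ZMod.natCast_val, ZMod.cast_id]
    have hcc : c ≤ 1 := by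
      by_contra hcc
      push_neg at hcc
      have : n * 2 ≤ n * c := Nat.mul_le_mul_left n (by omega)
      omega
    have : c = 0 ∨ c = 1 := by omega
    rcases this with rfl | rfl
    · left
      rw [QuaternionGroup.one_def, hival, hc]
      simp
    · right
      rw [hival, hc]
      simp
  | xa i =>
    exfalso
    rw [DihedralGroup.one_def, pi_xa] at h
    cases h

/-- pull back a sub-multiset along a map -/
lemma multiset_pullback {α β : Type*} [DecidableEq α] (f : α → β) :
    ∀ (M' : Multiset β) (S : Multiset α), M' ≤ S.map f → ∃ M ≤ S, M.map f = M' := by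
  intro M'
  induction M' using Multiset.induction with
  | empty => intro S _; exact ⟨0, zero_le, by simp⟩
  | cons b M' ih =>
    intro S hle
    have hb : b ∈ S.map f := Multiset.mem_of_le hle (Multiset.mem_cons_self _ _)
    obtain ⟨g, hg, rfl⟩ := Multiset.mem_map.1 hb
    have hS : S = g ::ₘ S.erase g := (Multiset.cons_erase hg).symm
    rw [hS, Multiset.map_cons] at hle
    have hle' : M' ≤ (S.erase g).map f := (Multiset.cons_le_cons_iff _).1 hle
    obtain ⟨M, hM, hMf⟩ := ih _ hle'
    refine ⟨g ::ₘ M, ?_, by simp [hMf]⟩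
    rw [hS]
    exact Multiset.cons_le_cons _ hM

lemma perm_map_pullback {α β : Type*} [DecidableEq α] (f : α → β) :
    ∀ (l' : List β) (T : List α), l'.Perm (T.map f) → ∃ l : List α, l.Perm T ∧ l.map f = l' := by
  intro l'
  induction l' with
  | nil =>
    intro T h
    have h0 : T.map f = [] := List.Perm.eq_nil h.symm
    have hT : T = [] := by simpa using h0
    subst hT
    exact ⟨[], List.Perm.refl _, rfl⟩
  | cons b l' ih =>
    intro T h
    have hb : b ∈ T.map f := h.mem_iff.1 (by simp)
    obtain ⟨g, hg, rfl⟩ := List.mem_map.1 hb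
    have hT : (T.map f).Perm (f g :: (T.erase g).map f) := by
      have : T.Perm (g :: T.erase g) := List.perm_cons_erase hg
      simpa using this.map f
    have h2 : (f g :: l').Perm (f g :: (T.erase g).map f) := h.trans hT
    have h3 : l'.Perm ((T.erase g).map f) := h2.cons_inv
    obtain ⟨l, hl, hlf⟩ := ih _ h3
    exact ⟨g :: l, (hl.cons g).trans (List.perm_cons_erase hg).symm, by simp [hlf]⟩

/-- from Good of the image list, get a product-in-kernel sub-multiset of the original -/
lemma good_pullback {G H : Type*} [Group G] [Group H] [DecidableEq G] (φ : G →* H)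
    (S : List G) (N : ℕ) (h : Good N (S.map φ)) :
    ∃ l : List G, l ≠ [] ∧ (↑l : Multiset G) ≤ ↑S ∧ l.length ≤ N ∧ φ l.prod = 1 := by
  obtain ⟨T', hT'ne, hT'le, hT'len, l', hl'perm, hl'prod⟩ := h
  rw [show ((S.map φ : List H) : Multiset H) = Multiset.map φ ↑S from (Multiset.map_coe _ _).symm]
    at hT'le
  obtain ⟨M, hM, hMf⟩ := multiset_pullback φ ↑T' ↑S hT'le
  set T := M.toList with hT
  have hTM : (↑T : Multiset G) = M := Multiset.coe_toList M
  have hmap : (T.map φ).Perm T' := by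
    rw [← Multiset.coe_eq_coe, ← Multiset.map_coe, hTM, hMf]
  obtain ⟨l, hlperm, hlf⟩ := perm_map_pullback φ l' T (hl'perm.trans hmap.symm)
  refine ⟨l, ?_, ?_, ?_, ?_⟩
  · intro hnil
    apply hT'ne
    have h1 : l' = [] := by rw [← hlf, hnil]; rfl
    have h2 := hl'perm.length_eq
    rw [h1] at h2
    simpa using (List.length_eq_zero_iff.1 h2.symm)
  · rw [← hTM] at hM
    exact le_trans (le_of_eq (Multiset.coe_eq_coe.2 hlperm)) hM
  · calc l.length = (l.map φ).length := by simp
    _ = l'.length := by rw [hlf]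
    _ = T'.length := hl'perm.length_eq
    _ ≤ N := hT'len
  · calc φ l.prod = (l.map φ).prod := (List.prod_hom l φ).symm
    _ = l'.prod := by rw [hlf]
    _ = 1 := hl'prod

end DkAux

namespace DkAux

lemma fQ_ge3 {n : ℕ} (hn : 3 ≤ n) (S : List (QuaternionGroup n)) (hS : S.length = 2*n + 1) :
    Good (2*n) S := by
  obtain ⟨l₁, hl₁ne, hl₁le, hl₁len, hl₁prod⟩ :=
    good_pullback (pi n) (S.take (n+1)) n (fD hn _ (by simp [hS]; omega))
  have hl₁S : (↑l₁ : Multiset (QuaternionGroup n)) ≤ ↑S :=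
    le_trans hl₁le (Multiset.coe_le.2 (S.take_sublist (n+1)).subperm)
  rcases pi_ker (by omega) hl₁prod with h1 | h1
  · exact ⟨l₁, hl₁ne, hl₁S, by omega, isProdOne_self h1⟩
  · set M := (↑S : Multiset (QuaternionGroup n)) - ↑l₁ with hM
    have hMS : M ≤ ↑S := tsub_le_self
    have hMcard : Multiset.card M = 2*n + 1 - l₁.length := by
      rw [hM, Multiset.card_sub hl₁S]
      simp [hS]
    set S₂ := M.toList with hS₂
    have hS₂coe : (↑S₂ : Multiset (QuaternionGroup n)) = M := Multiset.coe_toList M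
    have hS₂len : n + 1 ≤ S₂.length := by
      have : S₂.length = Multiset.card M := by rw [← hS₂coe]; simp
      omega
    obtain ⟨l₂, hl₂ne, hl₂le, hl₂len, hl₂prod⟩ :=
      good_pullback (pi n) (S₂.take (n+1)) n (fD hn _ (by simp; omega))
    have hl₂M : (↑l₂ : Multiset (QuaternionGroup n)) ≤ M := by
      rw [← hS₂coe]
      exact le_trans hl₂le (Multiset.coe_le.2 (S₂.take_sublist (n+1)).subperm)
    rcases pi_ker (by omega) hl₂prod with h2 | h2
    · exact ⟨l₂, hl₂ne, le_trans hl₂M hMS, by omega, isProdOne_self h2⟩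
    · refine ⟨l₁ ++ l₂, by simp [hl₁ne], ?_, by simp; omega, isProdOne_self ?_⟩
      · have : (↑(l₁ ++ l₂) : Multiset (QuaternionGroup n)) = ↑l₁ + ↑l₂ := rfl
        rw [this]
        calc (↑l₁ : Multiset (QuaternionGroup n)) + ↑l₂ ≤ ↑l₁ + M := add_le_add_right hl₂M _
        _ = ↑S := by rw [hM]; exact add_tsub_cancel_of_le hl₁S
      · rw [List.prod_append, h1, h2, QuaternionGroup.a_mul_a]
        have : ((n : ℕ) : ZMod (2*n)) + ((n : ℕ) : ZMod (2*n)) = 0 := by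
          rw [← Nat.cast_add, show n + n = 2*n by ring, ZMod.natCast_self]
        rw [this, ← QuaternionGroup.one_def]

/-- classifier for Q8 -/
def c2 : QuaternionGroup 2 → Bool × Bool
  | .a i => (true, decide (i.val % 2 = 1))
  | .xa i => (false, decide (i.val % 2 = 1))

lemma Lq1 : ∀ x y : QuaternionGroup 2, c2 x = c2 y →
    x * y = 1 ∨ x * y = QuaternionGroup.a 2 := by decide

lemma Lq3 : ∀ u v w : QuaternionGroup 2, c2 u ≠ c2 v → c2 u ≠ c2 w → c2 v ≠ c2 w →
    c2 u ≠ c2 1 → c2 v ≠ c2 1 → c2 w ≠ c2 1 →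
    u * v * w = 1 ∨ u * w * v = 1 := by decide

lemma Lq4 : ∀ z : QuaternionGroup 2, c2 z = c2 1 →
    z = 1 ∨ z = QuaternionGroup.a 2 := by decide

lemma Lq5 : (QuaternionGroup.a 2 : QuaternionGroup 2) * QuaternionGroup.a 2 = 1 := by decide

lemma fQ2 (S : List (QuaternionGroup 2)) (hS : S.length = 5) : Good 4 S := by
  by_cases h1 : (1 : QuaternionGroup 2) ∈ S
  · exact ⟨[1], by simp, by simpa [Multiset.singleton_le] using h1, by simp,
      isProdOne_self (by simp)⟩
  · have hnd : ¬ (S.map c2).Nodup := by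
      intro hnd
      have hle := hnd.length_le_card
      rw [List.length_map, hS] at hle
      simp at hle
    obtain ⟨v, hdup⟩ := List.exists_duplicate_iff_not_nodup.2 hnd
    have hsub : [v, v] <+ S.map c2 := List.duplicate_iff_sublist.1 hdup
    obtain ⟨l', hl'sub, hl'eq⟩ := List.sublist_map_iff.1 hsub
    have hlen2 : l'.length = 2 := by
      have := congrArg List.length hl'eq
      simpa using this.symm
    obtain ⟨x, y, rfl⟩ := List.length_eq_two.1 hlen2
    have hcxy : c2 x = c2 y := by
      simp at hl'eq
      rw [← hl'eq.1, ← hl'eq.2]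
    have hxyS : (↑[x,y] : Multiset (QuaternionGroup 2)) ≤ ↑S := Multiset.coe_le.2 hl'sub.subperm
    rcases Lq1 x y hcxy with hxy | hxy
    · exact ⟨[x,y], by simp, hxyS, by simp, isProdOne_self (by simp [hxy])⟩
    · set M := (↑S : Multiset (QuaternionGroup 2)) - ↑[x,y] with hM
      have hMS : M ≤ ↑S := tsub_le_self
      have hMcard : Multiset.card M = 3 := by
        rw [hM, Multiset.card_sub hxyS]
        simp [hS]
      have hMcoe : (↑(M.toList) : Multiset (QuaternionGroup 2)) = M := Multiset.coe_toList M
      obtain ⟨u, w, z, hMl⟩ := List.length_eq_three.1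
        (show M.toList.length = 3 by rw [← Multiset.coe_card, hMcoe]; exact hMcard)
      have hmemM : ∀ g ∈ M.toList, g ∈ M := by
        intro g hg
        rw [← hMcoe]
        exact hg
      have hmem : ∀ g ∈ M.toList, g ∈ S := fun g hg => Multiset.mem_of_le hMS (hmemM g hg)
      -- combine [x,y] with a pair from the remainder
      have hcomb : ∀ L : List (QuaternionGroup 2), (↑L : Multiset (QuaternionGroup 2)) ≤ M →
          (↑([x,y] ++ L) : Multiset (QuaternionGroup 2)) ≤ ↑S := by
        intro L hle
        have : (↑([x,y] ++ L) : Multiset (QuaternionGroup 2)) = ↑[x,y] + ↑L := rfl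
        rw [this]
        calc (↑[x,y] : Multiset (QuaternionGroup 2)) + ↑L ≤ ↑[x,y] + M := add_le_add_right hle _
        _ = ↑S := by rw [hM]; exact add_tsub_cancel_of_le hxyS
      have pairfin : ∀ p q : QuaternionGroup 2, c2 p = c2 q →
          (↑[p,q] : Multiset (QuaternionGroup 2)) ≤ M → Good 4 S := by
        intro p q hpq hle
        rcases Lq1 p q hpq with h | h
        · exact ⟨[p,q], by simp, le_trans hle hMS, by simp, isProdOne_self (by simp [h])⟩
        · refine ⟨[x,y] ++ [p,q], by simp, hcomb [p,q] hle, by simp, isProdOne_self ?_⟩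
          have hp : ([x,y] ++ [p,q] : List (QuaternionGroup 2)).prod = (x*y)*(p*q) := by
            simp [mul_assoc]
          rw [hp, hxy, h, Lq5]
      have zfin : ∀ g, g ∈ M.toList → c2 g = c2 1 → Good 4 S := by
        intro g hg hc
        rcases Lq4 g hc with h | h
        · exact absurd (h ▸ hmem g hg) h1
        · refine ⟨[x,y] ++ [g], by simp, hcomb [g] (Multiset.singleton_le.2 (hmemM g hg)), by simp,
            isProdOne_self ?_⟩
          have hp : ([x,y] ++ [g] : List (QuaternionGroup 2)).prod = (x*y)*g := by
            simp [mul_assoc]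
          rw [hp, hxy, h, Lq5]
      have hsub_uw : [u,w] <+ M.toList := by
        rw [hMl]
        exact List.Sublist.cons₂ u (List.Sublist.cons₂ w (List.nil_sublist [z]))
      have hsub_uz : [u,z] <+ M.toList := by
        rw [hMl]
        exact List.Sublist.cons₂ u (List.Sublist.cons w (List.Sublist.refl [z]))
      have hsub_wz : [w,z] <+ M.toList := by
        rw [hMl]
        exact List.Sublist.cons u (List.Sublist.refl [w,z])
      have lem_le : ∀ L : List (QuaternionGroup 2), L <+ M.toList →
          (↑L : Multiset (QuaternionGroup 2)) ≤ M := by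
        intro L hle
        rw [← hMcoe]
        exact Multiset.coe_le.2 hle.subperm
      have humem : u ∈ M.toList := by rw [hMl]; simp
      have hwmem : w ∈ M.toList := by rw [hMl]; simp
      have hzmem : z ∈ M.toList := by rw [hMl]; simp
      by_cases huw : c2 u = c2 w
      · exact pairfin u w huw (lem_le _ hsub_uw)
      by_cases huz : c2 u = c2 z
      · exact pairfin u z huz (lem_le _ hsub_uz)
      by_cases hwz : c2 w = c2 z
      · exact pairfin w z hwz (lem_le _ hsub_wz)
      by_cases hcu : c2 u = c2 1
      · exact zfin u humem hcu
      by_cases hcw : c2 w = c2 1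
      · exact zfin w hwmem hcw
      by_cases hcz : c2 z = c2 1
      · exact zfin z hzmem hcz
      have hMle : (↑[u,w,z] : Multiset (QuaternionGroup 2)) ≤ ↑S := by
        rw [← hMl, hMcoe]
        exact hMS
      rcases Lq3 u w z huw huz hwz hcu hcw hcz with h | h
      · refine ⟨[u,w,z], by simp, hMle, by simp, isProdOne_self ?_⟩
        have hp : ([u,w,z] : List (QuaternionGroup 2)).prod = u*w*z := by simp [mul_assoc]
        rw [hp, h]
      · refine ⟨[u,z,w], by simp, ?_, by simp, isProdOne_self ?_⟩
        · refine le_trans (le_of_eq (Multiset.coe_eq_coe.2 ?_)) hMle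
          exact List.Perm.cons u (List.Perm.swap w z [])
        · have hp : ([u,z,w] : List (QuaternionGroup 2)).prod = u*z*w := by simp [mul_assoc]
          rw [hp, h]

lemma fQ {n : ℕ} (hn : 2 ≤ n) (S : List (QuaternionGroup n)) (hS : S.length = 2*n + 1) :
    Good (2*n) S := by
  rcases eq_or_lt_of_le hn with h | h
  · subst h
    exact fQ2 S (by omega)
  · exact fQ_ge3 (by omega) S hS

end DkAux

namespace DkAux

lemma prod_sign {G : Type*} [Group G] [DecidableEq G] (ψ : G →* ℤˣ) (x y : G) (hx : ψ x = 1) (hy : ψ y = -1)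
    (hxy : x ≠ y) : ∀ l : List G, (∀ z ∈ l, z = x ∨ z = y) → ψ l.prod = (-1) ^ (l.count y) := by
  intro l
  induction l with
  | nil => simp
  | cons z l ih =>
    intro hz
    have hzz := hz z (by simp)
    have hl : ∀ w ∈ l, w = x ∨ w = y := fun w hw => hz w (by simp [hw])
    rcases hzz with rfl | rfl
    · rw [List.prod_cons, map_mul, hx, one_mul, ih hl, List.count_cons_of_ne hxy]
    · rw [List.prod_cons, map_mul, hy, ih hl, List.count_cons_self, pow_succ]
      exact (mul_comm _ _)

lemma sum_lengths_ge {G : Type*} (N : ℕ) :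
    ∀ (Ts : List (List G)), (∀ T ∈ Ts, N ≤ T.length) →
      N * Ts.length ≤ (Ts.map List.length).sum := by
  intro Ts
  induction Ts with
  | nil => simp
  | cons T Ts ih =>
    intro h
    have h1 := h T (by simp)
    have h2 := ih (fun T' hT' => h T' (by simp [hT']))
    simp only [List.map_cons, List.sum_cons, List.length_cons, Nat.mul_succ]
    omega

lemma no_k_disjoint {G : Type*} [Group G] [DecidableEq G] (N k m : ℕ) (hN : 0 < N) (x y : G)
    (hx : orderOf x = N) (ψ : G →* ℤˣ) (hψx : ψ x = 1) (hψy : ψ y = -1)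
    (hm : m ≤ N * k) (hm0 : 0 < m)
    (Ts : List (List G)) (hTs : Ts.length = k) (hprop : ∀ T ∈ Ts, T ≠ [] ∧ IsProdOne T)
    (hle : (Ts.flatten : Multiset G) ≤ ((List.replicate (m-1) x ++ [y] : List G) : Multiset G)) :
    False := by
  have hxy : x ≠ y := by
    intro h
    rw [h, hψy] at hψx
    exact (by decide : ¬ ((-1 : ℤˣ) = 1)) hψx
  set S0 : List G := List.replicate (m-1) x ++ [y] with hS0
  have hS0county : S0.count y = 1 := by
    rw [hS0, List.count_append, List.count_replicate]
    simp [hxy]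
  have hS0countx : S0.count x = m - 1 := by
    rw [hS0, List.count_append, List.count_replicate]
    simp [hxy, Ne.symm hxy]
  have hTfacts : ∀ T ∈ Ts, (∀ z ∈ T, z = x) ∧ N ≤ T.length := by
    intro T hT
    obtain ⟨hTne, l, hlperm, hlprod⟩ := hprop T hT
    have hTsub : (↑T : Multiset G) ≤ ↑S0 :=
      le_trans (Multiset.coe_le.2 (List.sublist_flatten_of_mem hT).subperm) hle
    have hmemT : ∀ z ∈ T, z = x ∨ z = y := by
      intro z hz
      have hzS : z ∈ S0 := Multiset.mem_of_le hTsub hz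
      rcases List.mem_append.1 hzS with h | h
      · left; exact List.eq_of_mem_replicate h
      · right; simpa using h
    have hcnt : T.count y ≤ 1 := by
      have h1 := Multiset.count_le_of_le y hTsub
      rw [Multiset.coe_count, Multiset.coe_count, hS0county] at h1
      exact h1
    have hcnt0 : T.count y = 0 := by
      by_contra hne0
      have hc1 : T.count y = 1 := by omega
      have hlmem : ∀ z ∈ l, z = x ∨ z = y := fun z hz => hmemT z (hlperm.mem_iff.1 hz)
      have hps := prod_sign ψ x y hψx hψy hxy l hlmem
      rw [hlprod, map_one, hlperm.count_eq, hc1] at hps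
      exact (by decide : ¬ ((1 : ℤˣ) = (-1)^1)) hps
    have hallx : ∀ z ∈ T, z = x := by
      intro z hz
      rcases hmemT z hz with h | h
      · exact h
      · exfalso
        rw [h] at hz
        have := List.count_pos_iff.2 hz
        omega
    refine ⟨hallx, ?_⟩
    have hlx : ∀ z ∈ l, z = x := fun z hz => hallx z (hlperm.mem_iff.1 hz)
    have hlrep : l = List.replicate l.length x := List.eq_replicate_length.2 hlx
    have hpow : x ^ l.length = 1 := by rw [← List.prod_replicate, ← hlrep, hlprod]
    have hdvd : N ∣ l.length := by rw [← hx]; exact orderOf_dvd_iff_pow_eq_one.2 hpow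
    have hlne : l.length ≠ 0 := by
      rw [hlperm.length_eq]
      intro h
      exact hTne (List.length_eq_zero_iff.1 h)
    have := Nat.le_of_dvd (by omega) hdvd
    rwa [hlperm.length_eq] at this
  have hsum : N * k ≤ (Ts.map List.length).sum := by
    rw [← hTs]
    exact sum_lengths_ge N Ts (fun T hT => (hTfacts T hT).2)
  have hcount := Multiset.count_le_of_le x hle
  rw [Multiset.coe_count, Multiset.coe_count, hS0countx] at hcount
  have hflatx : Ts.flatten.count x = Ts.flatten.length := by
    apply List.count_eq_length.2
    intro b hb
    obtain ⟨T, hT, hbT⟩ := List.mem_flatten.1 hb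
    exact ((hTfacts T hT).1 b hbT).symm
  have hlenflat : Ts.flatten.length = (Ts.map List.length).sum := List.length_flatten
  omega

lemma upper {G : Type*} [Group G] [DecidableEq G] (N : ℕ)
    (hf : ∀ S : List G, S.length = N+1 → Good N S) :
    ∀ (k : ℕ) (S : List G), N*k + 1 ≤ S.length →
    ∃ Ts : List (List G), Ts.length = k ∧ (∀ T ∈ Ts, T ≠ [] ∧ IsProdOne T) ∧
      (Ts.flatten : Multiset G) ≤ (S : Multiset G) := by
  intro k
  induction k with
  | zero =>
    intro S _
    exact ⟨[], rfl, by simp, by simp⟩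
  | succ k ih =>
    intro S hlen
    rw [Nat.mul_succ] at hlen
    obtain ⟨T, hTne, hTle, hTlen, hTprod⟩ := hf (S.take (N+1))
      (by rw [List.length_take]; omega)
    have hTS : (↑T : Multiset G) ≤ ↑S :=
      le_trans hTle (Multiset.coe_le.2 (S.take_sublist _).subperm)
    set M := (↑S : Multiset G) - ↑T with hM
    have hMcard : N*k + 1 ≤ Multiset.card M := by
      rw [hM, Multiset.card_sub hTS]
      simp only [Multiset.coe_card]
      omega
    obtain ⟨Ts, hTslen, hTsprop, hTsle⟩ := ih M.toList (by simpa using hMcard)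
    refine ⟨T :: Ts, by simp [hTslen], ?_, ?_⟩
    · intro T' hT'
      rcases List.mem_cons.1 hT' with rfl | h
      · exact ⟨hTne, hTprod⟩
      · exact hTsprop _ h
    · have h1 : ((T :: Ts).flatten : Multiset G) = ↑T + ↑Ts.flatten := rfl
      rw [h1]
      have h2 : (↑Ts.flatten : Multiset G) ≤ M := by
        rw [← Multiset.coe_toList M]
        exact hTsle
      calc (↑T : Multiset G) + ↑Ts.flatten ≤ ↑T + M := add_le_add_right h2 _
      _ = ↑S := by rw [hM]; exact add_tsub_cancel_of_le hTS

end DkAux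

namespace DkAux

def sgnDfun {n : ℕ} : DihedralGroup n → ℤˣ
  | .r _ => 1
  | .sr _ => -1

def sgnD (n : ℕ) : DihedralGroup n →* ℤˣ :=
  MonoidHom.mk' sgnDfun (by
    rintro (i|i) (j|j) <;>
      simp [sgnDfun, DihedralGroup.r_mul_r, DihedralGroup.r_mul_sr, DihedralGroup.sr_mul_r,
        DihedralGroup.sr_mul_sr])

def sgnQfun {n : ℕ} : QuaternionGroup n → ℤˣ
  | .a _ => 1
  | .xa _ => -1

def sgnQ (n : ℕ) : QuaternionGroup n →* ℤˣ :=
  MonoidHom.mk' sgnQfun (by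
    rintro (i|i) (j|j) <;>
      simp [sgnQfun, QuaternionGroup.a_mul_a, QuaternionGroup.a_mul_xa, QuaternionGroup.xa_mul_a,
        QuaternionGroup.xa_mul_xa])

lemma dk_eq {G : Type*} [Group G] [DecidableEq G] (N k : ℕ) (hN : 0 < N) (hk : 0 < k)
    (hf : ∀ S : List G, S.length = N+1 → Good N S)
    (x y : G) (hx : orderOf x = N) (ψ : G →* ℤˣ) (hψx : ψ x = 1) (hψy : ψ y = -1) :
    dkC G k = N * k + 1 := by
  have hmem : N*k+1 ∈ {m | 0 < m ∧ ∀ S : List G, S.length = m →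
      ∃ Ts : List (List G), Ts.length = k ∧ (∀ T ∈ Ts, T ≠ [] ∧ IsProdOne T) ∧
        (Ts.flatten : Multiset G) ≤ (S : Multiset G)} :=
    ⟨Nat.succ_pos _, fun S hS => upper N hf k S (le_of_eq hS.symm)⟩
  refine le_antisymm (Nat.sInf_le hmem) (le_csInf ⟨_, hmem⟩ ?_)
  intro m hm
  by_contra hcon
  push_neg at hcon
  have hm0 := hm.1
  obtain ⟨Ts, hTs1, hTs2, hTs3⟩ := hm.2 (List.replicate (m-1) x ++ [y]) (by simp; omega)
  exact no_k_disjoint N k m hN x y hx ψ hψx hψy (by omega) hm0 Ts hTs1 hTs2 hTs3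

end DkAux

/-- `d_k(D_{2n}) = nk + 1` for `n ≥ 3`, and `d_k(Q_{4n}) = 2nk + 1` for `n ≥ 2`. -/
theorem dk_dihedral_dicyclic :
    (∀ n k : ℕ, 3 ≤ n → 0 < k → dkC (DihedralGroup n) k = n * k + 1) ∧
    (∀ n k : ℕ, 2 ≤ n → 0 < k → dkC (QuaternionGroup n) k = 2 * n * k + 1) := by
  constructor
  · intro n k hn hk
    exact DkAux.dk_eq n k (by omega) hk (DkAux.fD hn) (DihedralGroup.r 1) (DihedralGroup.sr 0)
      DihedralGroup.orderOf_r_one (DkAux.sgnD n) rfl rfl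
  · intro n k hn hk
    exact DkAux.dk_eq (2*n) k (by omega) hk (DkAux.fQ hn) (QuaternionGroup.a 1)
      (QuaternionGroup.xa 0) QuaternionGroup.orderOf_a_one (DkAux.sgnQ n) rfl rfl
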